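/- Let H be a complex Hilbert space, (P_k)_{k∈I} mutually orthogonal projections, and (a_k) a finitely supported family of bounded operators with pairwise orthogonal ranges conditions as follows: P_k^⊥ a_k a_k^* P_k^⊥ = c_k · P_k^⊥ for nonnegative reals c_k, where P_k^⊥ = 1 − P_k. Then ‖Σ_k P_k^⊥ a_k P_k‖² ≤ Σ_k c_k. -/
import Mathlib

lemma aux_proj_norm_le_one {A : Type*} [NormedRing A] [StarRing A] [CStarRing A]
    {p : A} (hsa : IsSelfAdjoint p) (hid : IsIdempotentElem p) : ‖p‖ ≤ 1 := by
  have h : ‖p‖ * ‖p‖ = ‖p‖ := by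
    rw [← CStarRing.norm_star_mul_self, hsa.star_eq, hid.eq]
  nlinarith [norm_nonneg p]

/-- row estimate: if `P k` are mutually orthogonal projections
and `(1 - P k) (a k) (a k)* (1 - P k) = c k • (1 - P k)` with `c k ≥ 0`, then
`‖∑ k in s, (1 - P k) * a k * P k‖² ≤ ∑ k in s, c k`. -/
theorem norm_sq_sum_row_le {H : Type*} [NormedAddCommGroup H]
    [InnerProductSpace ℂ H] [CompleteSpace H] {I : Type*}
    (P : I → H →L[ℂ] H) (hPsa : ∀ k, IsSelfAdjoint (P k))
    (hPidem : ∀ k, IsIdempotentElem (P k))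
    (hPorth : ∀ j k, j ≠ k → P j * P k = 0)
    (a : I → H →L[ℂ] H) (c : I → ℝ) (hc : ∀ k, 0 ≤ c k)
    (hdiag : ∀ k, (1 - P k) * (a k * star (a k)) * (1 - P k)
      = (c k : ℂ) • (1 - P k))
    (s : Finset I) :
    ‖∑ k ∈ s, (1 - P k) * a k * P k‖ ^ 2 ≤ ∑ k ∈ s, c k := by
  set T := ∑ k ∈ s, (1 - P k) * a k * P k with hT
  have hQsa : ∀ k, IsSelfAdjoint (1 - P k) := fun k => (IsSelfAdjoint.one _).sub (hPsa k)
  have hQid : ∀ k, IsIdempotentElem (1 - P k) := fun k => (hPidem k).one_sub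
  have hTstar : star T = ∑ k ∈ s, P k * star (a k) * (1 - P k) := by
    rw [hT, star_sum]
    refine Finset.sum_congr rfl fun k _ => ?_
    simp [star_mul, (hPsa k).star_eq, (hQsa k).star_eq, mul_assoc]
  have hTT : T * star T
      = ∑ k ∈ s, ((1 - P k) * a k * P k) * (P k * star (a k) * (1 - P k)) := by
    rw [hT, hTstar, Finset.sum_mul_sum]
    refine Finset.sum_congr rfl fun j hj => ?_
    rw [Finset.sum_eq_single j]
    · intro k hk hne
      have h0 : P j * P k = 0 := hPorth j k (fun h => hne h.symm)
      calc (1 - P j) * a j * P j * (P k * star (a k) * (1 - P k))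
          = (1 - P j) * a j * (P j * P k) * (star (a k) * (1 - P k)) := by
            simp only [mul_assoc]
        _ = 0 := by rw [h0]; simp
    · intro h; exact absurd hj h
  -- bound each term
  have hterm : ∀ k ∈ s, ‖((1 - P k) * a k * P k) * (P k * star (a k) * (1 - P k))‖ ≤ c k := by
    intro k _
    have hb : star ((1 - P k) * a k * P k) = P k * star (a k) * (1 - P k) := by
      simp [star_mul, (hPsa k).star_eq, (hQsa k).star_eq, mul_assoc]
    rw [← hb, CStarRing.norm_self_mul_star]
    have h1 : ‖(1 - P k) * a k‖ * ‖(1 - P k) * a k‖ ≤ c k := by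
      rw [← CStarRing.norm_self_mul_star]
      have : ((1 - P k) * a k) * star ((1 - P k) * a k)
          = (1 - P k) * (a k * star (a k)) * (1 - P k) := by
        simp only [star_mul, (hQsa k).star_eq, mul_assoc]
      rw [this, hdiag k, norm_smul]
      have : ‖(c k : ℂ)‖ = c k := by
        simp [Complex.norm_real, abs_of_nonneg (hc k)]
      rw [this]
      calc c k * ‖1 - P k‖ ≤ c k * 1 :=
            mul_le_mul_of_nonneg_left (aux_proj_norm_le_one (hQsa k) (hQid k)) (hc k)
        _ = c k := mul_one _
    have h2 : ‖(1 - P k) * a k * P k‖ ≤ ‖(1 - P k) * a k‖ := by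
      calc ‖(1 - P k) * a k * P k‖ ≤ ‖(1 - P k) * a k‖ * ‖P k‖ := norm_mul_le _ _
        _ ≤ ‖(1 - P k) * a k‖ * 1 := by
            exact mul_le_mul_of_nonneg_left (aux_proj_norm_le_one (hPsa k) (hPidem k))
              (norm_nonneg _)
        _ = _ := mul_one _
    calc ‖(1 - P k) * a k * P k‖ * ‖(1 - P k) * a k * P k‖
        ≤ ‖(1 - P k) * a k‖ * ‖(1 - P k) * a k‖ :=
          mul_le_mul h2 h2 (norm_nonneg _) (norm_nonneg _)
      _ ≤ c k := h1
  calc ‖T‖ ^ 2 = ‖T * star T‖ := by rw [CStarRing.norm_self_mul_star, sq]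
    _ = ‖∑ k ∈ s, ((1 - P k) * a k * P k) * (P k * star (a k) * (1 - P k))‖ := by rw [hTT]
    _ ≤ ∑ k ∈ s, ‖((1 - P k) * a k * P k) * (P k * star (a k) * (1 - P k))‖ :=
        norm_sum_le _ _
    _ ≤ ∑ k ∈ s, c k := Finset.sum_le_sum hterm
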